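/- Let A_1,...,A_ℓ ∈ Q^{m×n}, b_1,...,b_ℓ ∈ Q^m, D = {x ∈ Z^n : l ≤ x ≤ u}, and let A^∀ x ≤ b^∀ be an additional system. Then the mixed integer program consisting of constraints -A_l x - (L^l - b_l - r^l)∘y^l ≤ -L^l for all l, v_l ≤ sum_j y^l_j, v ≤ v_l, v ≥ 1, A^∀ x ≤ b^∀, x ∈ D, and all v, v_l, y^l_j binary, is feasible if and only if there exists x ∈ D with A^∀ x ≤ b^∀ such that for every l ∈ [ℓ] the system A_l x ≤ b_l is violated in at least one row. -/

import Mathlib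

/-- The mixed integer program used in the `wins` call for a universal
outer block — consisting of the indicator constraints
`-A_l x - (L^l_j - (b_l)_j - r^l_j) y^l_j ≤ -L^l_j` for all systems `l` and rows `j`,
`v_l ≤ ∑_j y^l_j`, `v ≤ v_l`, `v ≥ 1`, the universal system `A^∀ x ≤ b^∀`, `x` in the
integer box `D`, and all `v, v_l, y^l_j` binary — is feasible if and only if there is
`x ∈ D` with `A^∀ x ≤ b^∀` violating at least one row of every system `A_l x ≤ b_l`. -/
theorem stmt5 (ℓ m n mU : ℕ)
    (A : Fin ℓ → Fin m → Fin n → ℚ) (b : Fin ℓ → Fin m → ℚ)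
    (l u : Fin n → ℤ) (L r : Fin ℓ → Fin m → ℚ)
    (AU : Fin mU → Fin n → ℚ) (bU : Fin mU → ℚ)
    (hL : ∀ k j (x : Fin n → ℤ), (∀ i, l i ≤ x i ∧ x i ≤ u i) →
      L k j ≤ ∑ i, A k j i * (x i : ℚ))
    (hr : ∀ k j, 0 < r k j)
    (hgap : ∀ k j (x : Fin n → ℤ), (∀ i, l i ≤ x i ∧ x i ≤ u i) →
      ((∑ i, A k j i * (x i : ℚ)) > b k j ↔ (∑ i, A k j i * (x i : ℚ)) ≥ b k j + r k j)) :
    (∃ (x : Fin n → ℤ) (y : Fin ℓ → Fin m → ℤ) (v : ℤ) (vl : Fin ℓ → ℤ),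
      (∀ i, l i ≤ x i ∧ x i ≤ u i) ∧
      (∀ k j, y k j = 0 ∨ y k j = 1) ∧ (v = 0 ∨ v = 1) ∧ (∀ k, vl k = 0 ∨ vl k = 1) ∧
      (∀ k j, -(∑ i, A k j i * (x i : ℚ)) - (L k j - b k j - r k j) * (y k j : ℚ)
        ≤ -(L k j)) ∧
      (∀ k, vl k ≤ ∑ j, y k j) ∧
      (∀ k, v ≤ vl k) ∧ 1 ≤ v ∧
      (∀ q, ∑ i, AU q i * (x i : ℚ) ≤ bU q))
    ↔ (∃ x : Fin n → ℤ, (∀ i, l i ≤ x i ∧ x i ≤ u i) ∧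
        (∀ q, ∑ i, AU q i * (x i : ℚ) ≤ bU q) ∧
        ∀ k, ∃ j, ¬ ((∑ i, A k j i * (x i : ℚ)) ≤ b k j)) := by
  constructor
  · rintro ⟨x, y, v, vl, hbox, hy01, hv01, hvl01, hcon, hsum, hvvl, hv1, hU⟩
    refine ⟨x, hbox, hU, fun k => ?_⟩
    have hsk : 1 ≤ ∑ j, y k j := le_trans (le_trans hv1 (hvvl k)) (hsum k)
    have hex : ∃ j, y k j = 1 := by
      by_contra h
      push_neg at h
      have h0 : ∀ j, y k j = 0 := fun j => (hy01 k j).resolve_right (h j)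
      simp [h0] at hsk
    obtain ⟨j, hj⟩ := hex
    refine ⟨j, ?_⟩
    have hc := hcon k j
    rw [hj] at hc
    push_cast at hc
    have h1 : b k j + r k j ≤ ∑ i, A k j i * (x i : ℚ) := by linarith
    have := hr k j
    linarith
  · rintro ⟨x, hbox, hU, hviol⟩
    refine ⟨x, fun k j => if b k j < ∑ i, A k j i * (x i : ℚ) then 1 else 0, 1,
      fun _ => 1, hbox, ?_, Or.inr rfl, fun _ => Or.inr rfl, ?_, ?_,
      fun _ => le_refl 1, le_refl 1, hU⟩
    · intro k j; dsimp only; split <;> simp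
    · intro k j
      dsimp only
      split
      · next h =>
        have := (hgap k j x hbox).mp h
        push_cast
        linarith
      · have := hL k j x hbox
        push_cast
        linarith
    · intro k
      obtain ⟨j, hj⟩ := hviol k
      push_neg at hj
      calc (1:ℤ) = (if b k j < ∑ i, A k j i * (x i : ℚ) then 1 else 0) := by simp [hj]
        _ ≤ ∑ j', (if b k j' < ∑ i, A k j' i * (x i : ℚ) then (1:ℤ) else 0) :=
          Finset.single_le_sum (f := fun j' => if b k j' < ∑ i, A k j' i * (x i : ℚ) then (1:ℤ) else 0) (fun j' _ => by split <;> simp) (Finset.mem_univ j)
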